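/- arXiv:1302.4170 — 3 statements merged into one kernel-verified Lean document; each statement's English description precedes it below -/
import Mathlib

section
/- Let A₁ be a finite nonempty subset of F_p^* and suppose a₀' ∈ A₁ satisfies Σ_{a ∈ A₁} #(aA₁ ∩ a₀'A₁) ≥ (#A₁)³/#(A₁·A₁). Let A₂ = {a ∈ A₁ : #((a/a₀')A₁ ∩ A₁) ≥ (#A₁)²/(2·#(A₁·A₁))}. Then #A₂ ≥ (#A₁)²/(2·#(A₁·A₁)). -/
open Finset Pointwise

theorem stmt_4 {p : ℕ} [Fact p.Prime]
    (A₁ : Finset (ZMod p)) (hA₁ : A₁.Nonempty) (h0 : (0 : ZMod p) ∉ A₁)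
    (a₀' : ZMod p) (ha₀' : a₀' ∈ A₁)
    (hsum : ((A₁.card : ℚ) ^ 3) / ((A₁ * A₁).card : ℚ)
      ≤ ∑ a ∈ A₁, (((a • A₁) ∩ (a₀' • A₁)).card : ℚ))
    (A₂ : Finset (ZMod p))
    (hA₂ : A₂ = A₁.filter fun a =>
      ((A₁.card : ℚ) ^ 2) / (2 * ((A₁ * A₁).card : ℚ))
        ≤ (((((a / a₀' : ZMod p)) • A₁) ∩ A₁).card : ℚ)) :
    ((A₁.card : ℚ) ^ 2) / (2 * ((A₁ * A₁).card : ℚ)) ≤ (A₂.card : ℚ) := by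
  have ha0 : a₀' ≠ 0 := fun h => h0 (h ▸ ha₀')
  subst hA₂
  set N : ℚ := (A₁.card : ℚ) with hN
  set M : ℚ := ((A₁ * A₁).card : ℚ) with hM
  have hNpos : 0 < N := by
    rw [hN]; exact_mod_cast Finset.card_pos.mpr hA₁
  have hMpos : 0 < M := by
    rw [hM]; exact_mod_cast Finset.card_pos.mpr (hA₁.mul hA₁)
  have hinj : Function.Injective (fun x : ZMod p => a₀' * x) :=
    fun x y h => mul_left_cancel₀ ha0 h
  -- rewrite each summand
  have hterm : ∀ a ∈ A₁, (((a • A₁) ∩ (a₀' • A₁)).card : ℚ)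
      = ((((a / a₀' : ZMod p)) • A₁) ∩ A₁).card := by
    intro a _
    congr 1
    have heq : a₀' • ((((a / a₀' : ZMod p)) • A₁) ∩ A₁) = (a • A₁) ∩ (a₀' • A₁) := by
      rw [show a₀' • ((((a / a₀' : ZMod p)) • A₁) ∩ A₁)
          = Finset.image (fun x => a₀' * x) ((((a / a₀' : ZMod p)) • A₁) ∩ A₁) from rfl,
        Finset.image_inter _ _ hinj]
      congr 1
      rw [show (a / a₀' : ZMod p) • A₁ = Finset.image (fun x => (a / a₀') * x) A₁ from rfl,
        Finset.image_image]
      show Finset.image (fun x => a₀' * ((a / a₀') * x)) A₁ = a • A₁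
      have hx : ∀ x : ZMod p, a₀' * ((a / a₀') * x) = a * x := by
        intro x
        field_simp
      simp only [hx]
      rfl
    rw [← heq, show a₀' • ((((a / a₀' : ZMod p)) • A₁) ∩ A₁)
        = Finset.image (fun x => a₀' * x) ((((a / a₀' : ZMod p)) • A₁) ∩ A₁) from rfl,
      Finset.card_image_of_injective _ hinj]
  rw [Finset.sum_congr rfl hterm] at hsum
  -- split sum
  have hsplit := Finset.sum_filter_add_sum_filter_not A₁
    (fun a => N ^ 2 / (2 * M) ≤ (((((a / a₀' : ZMod p)) • A₁) ∩ A₁).card : ℚ))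
    (fun a => (((((a / a₀' : ZMod p)) • A₁) ∩ A₁).card : ℚ))
  set A₂ := A₁.filter (fun a => N ^ 2 / (2 * M)
      ≤ (((((a / a₀' : ZMod p)) • A₁) ∩ A₁).card : ℚ)) with hA₂def
  have hbound1 : ∑ a ∈ A₂, (((((a / a₀' : ZMod p)) • A₁) ∩ A₁).card : ℚ)
      ≤ (A₂.card : ℚ) * N := by
    calc ∑ a ∈ A₂, (((((a / a₀' : ZMod p)) • A₁) ∩ A₁).card : ℚ)
        ≤ ∑ _a ∈ A₂, N := by
          apply Finset.sum_le_sum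
          intro a _
          rw [hN]
          exact_mod_cast Finset.card_le_card (Finset.inter_subset_right)
      _ = (A₂.card : ℚ) * N := by rw [Finset.sum_const, nsmul_eq_mul]
  have hbound2 : ∑ a ∈ A₁.filter (fun a => ¬ (N ^ 2 / (2 * M)
        ≤ (((((a / a₀' : ZMod p)) • A₁) ∩ A₁).card : ℚ))),
        (((((a / a₀' : ZMod p)) • A₁) ∩ A₁).card : ℚ)
      ≤ N * (N ^ 2 / (2 * M)) := by
    calc _ ≤ ∑ _a ∈ A₁.filter (fun a => ¬ (N ^ 2 / (2 * M)
        ≤ (((((a / a₀' : ZMod p)) • A₁) ∩ A₁).card : ℚ))), N ^ 2 / (2 * M) := by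
          apply Finset.sum_le_sum
          intro a ha
          exact le_of_not_ge (Finset.mem_filter.mp ha).2
      _ = ((A₁.filter _).card : ℚ) * (N ^ 2 / (2 * M)) := by
          rw [Finset.sum_const, nsmul_eq_mul]
      _ ≤ N * (N ^ 2 / (2 * M)) := by
          apply mul_le_mul_of_nonneg_right
          · rw [hN]; exact_mod_cast Finset.card_filter_le _ _
          · positivity
  have key : N ^ 3 / M ≤ (A₂.card : ℚ) * N + N * (N ^ 2 / (2 * M)) :=
    hsum.trans (hsplit.symm.le.trans (add_le_add hbound1 hbound2))
  have h2 : N ^ 3 / M = 2 * (N * (N ^ 2 / (2 * M))) := by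
    field_simp
  have hfin : N * (N ^ 2 / (2 * M)) ≤ (A₂.card : ℚ) * N := by linarith
  rw [mul_comm] at hfin
  have := le_of_mul_le_mul_right hfin hNpos
  linarith
end

section
/- Let G be a cyclic group of order t generated by g, let d₀ ≥ 1, and let A₂ ⊆ {g^x : L+1 ≤ x ≤ L+M} be a set such that every a ∈ A₂ satisfies ord(a·(a₀')⁻¹) ≤ d₀ for some fixed a₀' = g^{x₀} with L+1 ≤ x₀ ≤ L+M. Then #A₂ ≤ (M d₀/t + 1)·τ(t), where τ(t) is the number of divisors of t. -/
open Finset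

theorem stmt_5 {G : Type*} [Group G] (g : G) (t : ℕ) (ht : orderOf g = t) (htpos : 0 < t)
    (d₀ : ℕ) (hd₀ : 1 ≤ d₀) (M : ℕ) (L x₀ : ℤ)
    (hx₀ : x₀ ∈ Set.Icc (L + 1) (L + (M : ℤ)))
    (A₂ : Finset G)
    (hA₂sub : ∀ a ∈ A₂, ∃ x : ℤ, x ∈ Set.Icc (L + 1) (L + (M : ℤ)) ∧ a = g ^ x)
    (hord : ∀ a ∈ A₂, orderOf (a * (g ^ x₀)⁻¹) ≤ d₀) :
    (A₂.card : ℚ) ≤ ((M : ℚ) * d₀ / t + 1) * (t.divisors.card : ℚ) := by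
  classical
  set f : G → ℕ := fun a => orderOf (a * (g ^ x₀)⁻¹) with hf
  -- choice of exponent
  set X : G → ℤ := fun a =>
    if h : ∃ x : ℤ, x ∈ Set.Icc (L + 1) (L + (M : ℤ)) ∧ a = g ^ x then h.choose else 0 with hXdef
  have hX : ∀ a ∈ A₂, X a ∈ Set.Icc (L + 1) (L + (M : ℤ)) ∧ a = g ^ X a := by
    intro a ha
    have h := hA₂sub a ha
    simp only [hXdef, dif_pos h]
    exact h.choose_spec
  have hgt : g ^ (t : ℤ) = 1 := by
    rw [zpow_natCast, ← ht, pow_orderOf_eq_one]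
  have hmul : ∀ a ∈ A₂, a * (g ^ x₀)⁻¹ = g ^ (X a - x₀) := by
    intro a ha
    rw [zpow_sub, ← (hX a ha).2]
    try rw [div_eq_mul_inv]
  have hdvdt : ∀ a ∈ A₂, f a ∈ t.divisors := by
    intro a ha
    rw [Nat.mem_divisors]
    refine ⟨?_, htpos.ne'⟩
    apply orderOf_dvd_of_pow_eq_one
    rw [hmul a ha, ← zpow_natCast, ← zpow_mul, mul_comm, zpow_mul, hgt, one_zpow]
  have hsum : A₂.card = ∑ d ∈ t.divisors, (A₂.filter fun a => f a = d).card :=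
    Finset.card_eq_sum_card_fiberwise hdvdt
  have hbound : ∀ d ∈ t.divisors,
      ((A₂.filter fun a => f a = d).card : ℚ) ≤ (M : ℚ) * d₀ / t + 1 := by
    intro d hd
    obtain ⟨hddvd, -⟩ := Nat.mem_divisors.1 hd
    have hdpos : 0 < d := Nat.pos_of_mem_divisors hd
    have hRHS0 : (0 : ℚ) ≤ (M : ℚ) * d₀ / t + 1 := by positivity
    by_cases hne : (A₂.filter fun a => f a = d).Nonempty
    swap
    · rw [Finset.not_nonempty_iff_eq_empty.1 hne]
      simpa using hRHS0
    obtain ⟨a₁, ha₁⟩ := hne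
    have hdd₀ : d ≤ d₀ := by
      obtain ⟨haA, hfa⟩ := Finset.mem_filter.1 ha₁
      rw [← hfa]
      exact hord a₁ haA
    set m : ℕ := t / d with hm
    have hmd : m * d = t := Nat.div_mul_cancel hddvd
    have hmpos : 0 < m := Nat.div_pos (Nat.le_of_dvd htpos hddvd) hdpos
    have hmzpos : (0 : ℤ) < (m : ℤ) := by exact_mod_cast hmpos
    set q₁ : ℤ := -((x₀ - (L + 1)) / (m : ℤ)) with hq₁
    set q₂ : ℤ := (L + (M : ℤ) - x₀) / (m : ℤ) with hq₂
    -- divisibility for elements of the fiber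
    have hdvdm : ∀ a ∈ A₂.filter fun a => f a = d, ((m : ℤ)) ∣ (X a - x₀) := by
      intro a ha
      obtain ⟨haA, hfa⟩ := Finset.mem_filter.1 ha
      have hordd : orderOf (g ^ (X a - x₀)) = d := by rw [← hmul a haA]; exact hfa
      have hpow : (g ^ (X a - x₀)) ^ (d : ℤ) = 1 := by
        rw [zpow_natCast, ← hordd, pow_orderOf_eq_one]
      rw [← zpow_mul] at hpow
      have htdvd : ((t : ℤ)) ∣ (X a - x₀) * (d : ℤ) := by
        rw [← ht]
        exact orderOf_dvd_iff_zpow_eq_one.2 hpow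
      have : ((m : ℤ)) * (d : ℤ) ∣ (X a - x₀) * (d : ℤ) := by
        rw [← Int.natCast_mul, hmd]; exact htdvd
      exact (mul_dvd_mul_iff_right (by exact_mod_cast hdpos.ne' : (d : ℤ) ≠ 0)).1 this
    -- injection into Finset.Icc q₁ q₂
    have hinj : (A₂.filter fun a => f a = d).card ≤ (Finset.Icc q₁ q₂).card := by
      apply Finset.card_le_card_of_injOn (fun a => (X a - x₀) / (m : ℤ))
      · intro a ha
        obtain ⟨haA, -⟩ := Finset.mem_filter.1 ha
        obtain ⟨⟨hx1, hx2⟩, -⟩ := hX a haA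
        obtain ⟨j, hj⟩ := hdvdm a ha
        simp only [Finset.mem_coe]
        rw [hj, Int.mul_ediv_cancel_left _ hmzpos.ne']
        rw [Finset.mem_Icc]
        constructor
        · rw [hq₁, neg_le]
          rw [Int.le_ediv_iff_mul_le hmzpos]
          nlinarith [hj, hx1]
        · rw [hq₂, Int.le_ediv_iff_mul_le hmzpos]
          nlinarith [hj, hx2]
      · intro a ha b hb hab
        simp only at hab
        have hXa := Int.ediv_mul_cancel (hdvdm a ha)
        have hXb := Int.ediv_mul_cancel (hdvdm b hb)
        have hXab : X a = X b := by
          have := congrArg (fun z => z * (m : ℤ)) hab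
          rw [hXa, hXb] at this
          omega
        obtain ⟨haA, -⟩ := Finset.mem_filter.1 ha
        obtain ⟨hbA, -⟩ := Finset.mem_filter.1 hb
        rw [(hX a haA).2, (hX b hbA).2, hXab]
    -- bound on card of Icc
    have hq2b : q₂ * (m : ℤ) ≤ L + (M : ℤ) - x₀ :=
      (Int.le_ediv_iff_mul_le hmzpos).1 le_rfl
    have hq1b : L + 1 - x₀ ≤ q₁ * (m : ℤ) := by
      have : ((x₀ - (L + 1)) / (m : ℤ)) * (m : ℤ) ≤ x₀ - (L + 1) :=
        (Int.le_ediv_iff_mul_le hmzpos).1 le_rfl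
      rw [hq₁]
      nlinarith [this]
    have hcardIcc : ((Finset.Icc q₁ q₂).card : ℚ) ≤ (M : ℚ) * d / t + 1 := by
      have hrw : (M : ℚ) * d / t = (M : ℚ) / m := by
        rw [← hmd]
        push_cast
        rw [mul_div_mul_right _ _ (by exact_mod_cast hdpos.ne' : ((d : ℚ)) ≠ 0)]
      rcases le_or_gt q₁ q₂ with h | h
      · have hz : ((Finset.Icc q₁ q₂).card : ℤ) = q₂ + 1 - q₁ := by
          rw [Int.card_Icc, Int.toNat_of_nonneg (by omega)]
        have hprod : (m : ℤ) * (q₂ - q₁) ≤ (M : ℤ) - 1 := by nlinarith [hq2b, hq1b]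
        have hprodq : (m : ℚ) * ((q₂ : ℚ) - q₁) ≤ (M : ℚ) - 1 := by exact_mod_cast hprod
        have hcq : ((Finset.Icc q₁ q₂).card : ℚ) = (q₂ : ℚ) + 1 - q₁ := by
          exact_mod_cast hz
        rw [hcq, hrw]
        rw [div_add' _ _ _ (by exact_mod_cast hmpos.ne' : ((m : ℚ)) ≠ 0)]
        rw [le_div_iff₀ (by exact_mod_cast hmpos : (0 : ℚ) < (m : ℚ))]
        nlinarith [hprodq, (by exact_mod_cast hmpos : (1 : ℚ) ≤ (m : ℚ))]
      · rw [Finset.Icc_eq_empty (by omega)]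
        simp only [Finset.card_empty, Nat.cast_zero]
        positivity
    calc ((A₂.filter fun a => f a = d).card : ℚ) ≤ ((Finset.Icc q₁ q₂).card : ℚ) := by
          exact_mod_cast hinj
      _ ≤ (M : ℚ) * d / t + 1 := hcardIcc
      _ ≤ (M : ℚ) * d₀ / t + 1 := by
          have hdq : (d : ℚ) ≤ (d₀ : ℚ) := by exact_mod_cast hdd₀
          gcongr
  calc (A₂.card : ℚ) = ∑ d ∈ t.divisors, ((A₂.filter fun a => f a = d).card : ℚ) := by
        rw [hsum]; push_cast; ring
    _ ≤ ∑ d ∈ t.divisors, ((M : ℚ) * d₀ / t + 1) := Finset.sum_le_sum hbound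
    _ = ((M : ℚ) * d₀ / t + 1) * (t.divisors.card : ℚ) := by
        rw [Finset.sum_const, nsmul_eq_mul, mul_comm]
end

section
/- Let A, B be finite subsets of F_p, with B nonempty. Then |Σ_{a∈A} Σ_{b∈B} e_p(ab)|⁸ ≤ p·(#A)⁴·(#B)⁴·E₊(A,A)·E₊(B,B), where e_p(z) = exp(2πi z/p) and E₊(S,T) = #{(s₁,s₂,t₁,t₂) ∈ S²×T² : s₁ + t₁ = s₂ + t₂} is the additive energy. -/
open Finset

/-- The standard additive character of `ZMod p`. -/
noncomputable def ep (p : ℕ) (z : ZMod p) : ℂ :=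
  Complex.exp (2 * Real.pi * Complex.I * (z.val : ℂ) / (p : ℂ))

section aux

variable {p : ℕ} [NeZero p]

lemma ep_eq_std (z : ZMod p) : ep p z = ZMod.stdAddChar z := by
  rw [ZMod.stdAddChar_apply, ZMod.toCircle_apply, ep]

lemma ep_add (x y : ZMod p) : ep p (x + y) = ep p x * ep p y := by
  simp only [ep_eq_std]; exact AddChar.map_add_eq_mul _ _ _

lemma ep_zero : ep p 0 = 1 := by
  simp only [ep_eq_std]; exact AddChar.map_zero_eq_one _

lemma norm_ep (z : ZMod p) : ‖ep p z‖ = 1 := by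
  rw [ep_eq_std, ZMod.stdAddChar_apply, Circle.norm_coe]

lemma conj_ep (z : ZMod p) : (starRingEnd ℂ) (ep p z) = ep p (-z) := by
  have h1 : ep p z * ep p (-z) = 1 := by rw [← ep_add]; simp [ep_zero]
  have h2 : ep p z * (starRingEnd ℂ) (ep p z) = 1 := by
    rw [mul_comm, Complex.conj_mul', norm_ep]
    norm_num
  have hne : ep p z ≠ 0 := by
    intro h; rw [h, zero_mul] at h2; exact one_ne_zero h2.symm
  exact mul_left_cancel₀ hne (h2.trans h1.symm)

lemma sum_ep (c : ZMod p) :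
    ∑ x : ZMod p, ep p (x * c) = if c = 0 then (p : ℂ) else 0 := by
  simp only [ep_eq_std]
  rw [AddChar.sum_mulShift c (ZMod.isPrimitive_stdAddChar p)]
  simp [ZMod.card]

lemma sum_r (B : Finset (ZMod p)) :
    ∑ d : ZMod p, #((B ×ˢ B).filter fun x => x.1 - x.2 = d) = B.card * B.card := by
  rw [← card_product B B]
  exact (card_eq_sum_card_fiberwise (fun x _ => mem_univ _)).symm

lemma sum_r_sq (B : Finset (ZMod p)) :
    ∑ d : ZMod p, (#((B ×ˢ B).filter fun x => x.1 - x.2 = d))^2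
      = Finset.addEnergy B B := by
  have h1 : ∀ d : ZMod p, (#((B ×ˢ B).filter fun x => x.1 - x.2 = d))^2
      = #((((B ×ˢ B) ×ˢ (B ×ˢ B))).filter fun z =>
          (z.1.1 - z.1.2 = z.2.1 - z.2.2) ∧ z.1.1 - z.1.2 = d) := by
    intro d
    rw [sq, ← card_product, ← filter_product]
    congr 1
    apply filter_congr
    intro z _
    constructor
    · rintro ⟨h1, h2⟩; exact ⟨h1.trans h2.symm, h1⟩
    · rintro ⟨h1, h2⟩; exact ⟨h2, h1 ▸ h2⟩
  simp_rw [h1, ← Finset.filter_filter]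
  rw [← card_eq_sum_card_fiberwise (f := fun z => z.1.1 - z.1.2)
        (s := ((B ×ˢ B) ×ˢ (B ×ˢ B)).filter fun z => z.1.1 - z.1.2 = z.2.1 - z.2.2)
        (t := univ) (fun x _ => mem_univ _)]
  rw [Finset.addEnergy]
  refine Finset.card_equiv (α := (ZMod p × ZMod p) × ZMod p × ZMod p)
    ((Equiv.refl (ZMod p × ZMod p)).prodCongr (Equiv.prodComm (ZMod p) (ZMod p))) ?_
  rintro ⟨⟨b1, b2⟩, b3, b4⟩
  simp only [mem_filter, mem_product, Equiv.prodCongr_apply, Equiv.coe_refl, Prod.map,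
    Equiv.prodComm_apply, Prod.swap, Finset.addEnergy, id]
  constructor
  · rintro ⟨⟨⟨hb1, hb2⟩, hb3, hb4⟩, h⟩
    exact ⟨⟨⟨hb1, hb2⟩, hb4, hb3⟩, by rw [sub_eq_sub_iff_add_eq_add] at h; linear_combination h⟩
  · rintro ⟨⟨⟨hb1, hb2⟩, hb4, hb3⟩, h⟩
    exact ⟨⟨⟨hb1, hb2⟩, hb3, hb4⟩, by rw [sub_eq_sub_iff_add_eq_add]; linear_combination h⟩

lemma parseval (A : Finset (ZMod p)) :
    ∑ d : ZMod p, ‖∑ a ∈ A, ep p (a * d)‖ ^ 4 = (p : ℝ) * (Finset.addEnergy A A : ℝ) := by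
  have key : ∑ d : ZMod p,
      ((∑ a ∈ A, ep p (a * d)) * (starRingEnd ℂ) (∑ a ∈ A, ep p (a * d))) ^ 2
      = (p : ℂ) * (Finset.addEnergy A A : ℂ) := by
    have expand : ∀ d : ZMod p,
        ((∑ a ∈ A, ep p (a * d)) * (starRingEnd ℂ) (∑ a ∈ A, ep p (a * d))) ^ 2
        = ∑ z ∈ (A ×ˢ A) ×ˢ (A ×ˢ A), ep p ((z.1.1 - z.1.2 + z.2.1 - z.2.2) * d) := by
      intro d
      have h1 : (∑ a ∈ A, ep p (a * d)) * (starRingEnd ℂ) (∑ a ∈ A, ep p (a * d))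
          = ∑ x ∈ A ×ˢ A, ep p ((x.1 - x.2) * d) := by
        rw [map_sum, sum_mul_sum, sum_product]
        refine Finset.sum_congr rfl fun a _ => Finset.sum_congr rfl fun a' _ => ?_
        rw [conj_ep, ← ep_add]
        congr 1
        ring
      conv_rhs => rw [sum_product]
      rw [h1, sq, sum_mul_sum]
      refine Finset.sum_congr rfl fun x _ => Finset.sum_congr rfl fun y _ => ?_
      rw [← ep_add]
      congr 1
      ring
    simp_rw [expand]
    rw [Finset.sum_comm]
    have inner : ∀ z : (ZMod p × ZMod p) × ZMod p × ZMod p,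
        ∑ d : ZMod p, ep p ((z.1.1 - z.1.2 + z.2.1 - z.2.2) * d)
        = if z.1.1 - z.1.2 + z.2.1 - z.2.2 = 0 then (p : ℂ) else 0 := by
      intro z
      rw [← sum_ep (z.1.1 - z.1.2 + z.2.1 - z.2.2)]
      exact Finset.sum_congr rfl fun d _ => by rw [mul_comm]
    simp_rw [inner]
    rw [← Finset.sum_filter, Finset.sum_const, nsmul_eq_mul]
    rw [mul_comm]
    congr 1
    rw [Finset.addEnergy]
    apply congrArg
    apply congrArg
    ext z
    simp only [Finset.mem_filter]
    constructor
    · rintro ⟨hz, h⟩; exact ⟨hz, by linear_combination h⟩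
    · rintro ⟨hz, h⟩; exact ⟨hz, by linear_combination h⟩
  have cast_eq : ((∑ d : ZMod p, ‖∑ a ∈ A, ep p (a * d)‖ ^ 4 : ℝ) : ℂ)
      = ∑ d : ZMod p,
        ((∑ a ∈ A, ep p (a * d)) * (starRingEnd ℂ) (∑ a ∈ A, ep p (a * d))) ^ 2 := by
    push_cast
    refine Finset.sum_congr rfl fun d _ => ?_
    rw [Complex.mul_conj, Complex.normSq_eq_norm_sq]
    push_cast
    ring
  have := cast_eq.trans key
  exact_mod_cast this

lemma T_expand (A B : Finset (ZMod p)) :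
    ((∑ a ∈ A, ‖∑ b ∈ B, ep p (a * b)‖ ^ 2 : ℝ) : ℂ)
      = ∑ y ∈ B ×ˢ B, ∑ a ∈ A, ep p (a * (y.1 - y.2)) := by
  have per : ∀ a : ZMod p, ((‖∑ b ∈ B, ep p (a * b)‖ ^ 2 : ℝ) : ℂ)
      = ∑ y ∈ B ×ˢ B, ep p (a * (y.1 - y.2)) := by
    intro a
    have h0 : ((‖∑ b ∈ B, ep p (a * b)‖ ^ 2 : ℝ) : ℂ)
        = (∑ b ∈ B, ep p (a * b)) * (starRingEnd ℂ) (∑ b ∈ B, ep p (a * b)) := by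
      rw [Complex.mul_conj, Complex.normSq_eq_norm_sq]
    rw [h0, map_sum, sum_mul_sum, sum_product]
    refine Finset.sum_congr rfl fun b _ => Finset.sum_congr rfl fun b' _ => ?_
    rw [conj_ep, ← ep_add]
    congr 1
    ring
  rw [Complex.ofReal_sum]
  simp_rw [per]
  exact Finset.sum_comm

end aux

theorem stmt_8 {p : ℕ} (hp : p.Prime) (A B : Finset (ZMod p)) (hB : B.Nonempty) :
    ‖∑ a ∈ A, ∑ b ∈ B, ep p (a * b)‖ ^ 8
      ≤ (p : ℝ) * (A.card : ℝ) ^ 4 * (B.card : ℝ) ^ 4 *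
        (Finset.addEnergy A A : ℝ) * (Finset.addEnergy B B : ℝ) := by
  haveI : NeZero p := ⟨hp.ne_zero⟩
  set u : ZMod p → ℝ := fun d => (#((B ×ˢ B).filter fun x => x.1 - x.2 = d) : ℝ) with hu_def
  set v : ZMod p → ℝ := fun d => ‖∑ a ∈ A, ep p (a * d)‖ with hv_def
  have hu0 : ∀ d, 0 ≤ u d := fun d => Nat.cast_nonneg _
  have hv0 : ∀ d, 0 ≤ v d := fun d => norm_nonneg _
  set T : ℝ := ∑ a ∈ A, ‖∑ b ∈ B, ep p (a * b)‖ ^ 2 with hT_def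
  have hT0 : 0 ≤ T := Finset.sum_nonneg fun a _ => sq_nonneg _
  -- Step 1 : ‖S‖² ≤ |A| * T
  have step1 : ‖∑ a ∈ A, ∑ b ∈ B, ep p (a * b)‖ ^ 2 ≤ (A.card : ℝ) * T := by
    have h1 : ‖∑ a ∈ A, ∑ b ∈ B, ep p (a * b)‖ ≤ ∑ a ∈ A, ‖∑ b ∈ B, ep p (a * b)‖ :=
      norm_sum_le _ _
    have h2 : (∑ a ∈ A, ‖∑ b ∈ B, ep p (a * b)‖) ^ 2 ≤ (A.card : ℝ) * T := by
      have := Finset.sum_mul_sq_le_sq_mul_sq A (fun _ => (1 : ℝ))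
        (fun a => ‖∑ b ∈ B, ep p (a * b)‖)
      simpa [hT_def] using this
    calc ‖∑ a ∈ A, ∑ b ∈ B, ep p (a * b)‖ ^ 2
        ≤ (∑ a ∈ A, ‖∑ b ∈ B, ep p (a * b)‖) ^ 2 := by
          apply pow_le_pow_left₀ (norm_nonneg _) h1
      _ ≤ (A.card : ℝ) * T := h2
  -- Step 2 : T ≤ ∑ d, u d * v d
  have step2 : T ≤ ∑ d : ZMod p, u d * v d := by
    have hTnorm : T ≤ ‖((T : ℝ) : ℂ)‖ := by
      rw [Complex.norm_real]
      exact le_abs_self T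
    have h3 : ‖((T : ℝ) : ℂ)‖ ≤ ∑ y ∈ B ×ˢ B, ‖∑ a ∈ A, ep p (a * (y.1 - y.2))‖ := by
      rw [hT_def, T_expand A B]
      exact norm_sum_le _ _
    have h4 : ∑ y ∈ B ×ˢ B, ‖∑ a ∈ A, ep p (a * (y.1 - y.2))‖
        = ∑ d : ZMod p, u d * v d := by
      rw [← Finset.sum_fiberwise (B ×ˢ B) (fun y => y.1 - y.2)
        (fun y => ‖∑ a ∈ A, ep p (a * (y.1 - y.2))‖)]
      refine Finset.sum_congr rfl fun d _ => ?_
      have : ∀ y ∈ (B ×ˢ B).filter fun y => y.1 - y.2 = d,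
          ‖∑ a ∈ A, ep p (a * (y.1 - y.2))‖ = v d := by
        intro y hy
        rw [(Finset.mem_filter.1 hy).2]
      rw [Finset.sum_congr rfl this, Finset.sum_const, nsmul_eq_mul]
    calc T ≤ ‖((T : ℝ) : ℂ)‖ := hTnorm
      _ ≤ ∑ y ∈ B ×ˢ B, ‖∑ a ∈ A, ep p (a * (y.1 - y.2))‖ := h3
      _ = ∑ d : ZMod p, u d * v d := h4
  -- Step 3 : (∑ u v)² ≤ (∑ u) * (∑ u v²)
  have step3 : (∑ d : ZMod p, u d * v d) ^ 2
      ≤ (∑ d : ZMod p, u d) * (∑ d : ZMod p, u d * v d ^ 2) := by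
    have := Finset.sum_mul_sq_le_sq_mul_sq (univ : Finset (ZMod p))
      (fun d => Real.sqrt (u d)) (fun d => Real.sqrt (u d) * v d)
    have e1 : ∀ d : ZMod p, Real.sqrt (u d) * (Real.sqrt (u d) * v d) = u d * v d := by
      intro d
      rw [← mul_assoc, Real.mul_self_sqrt (hu0 d)]
    have e2 : ∀ d : ZMod p, Real.sqrt (u d) ^ 2 = u d := fun d => Real.sq_sqrt (hu0 d)
    have e3 : ∀ d : ZMod p, (Real.sqrt (u d) * v d) ^ 2 = u d * v d ^ 2 := by
      intro d
      rw [mul_pow, Real.sq_sqrt (hu0 d)]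
    simp_rw [e1, e2, e3] at this
    exact this
  -- Step 4 : (∑ u v²)² ≤ (∑ u²) * (∑ v⁴)
  have step4 : (∑ d : ZMod p, u d * v d ^ 2) ^ 2
      ≤ (∑ d : ZMod p, u d ^ 2) * (∑ d : ZMod p, v d ^ 4) := by
    have := Finset.sum_mul_sq_le_sq_mul_sq (univ : Finset (ZMod p))
      u (fun d => v d ^ 2)
    have e : ∀ d : ZMod p, (v d ^ 2) ^ 2 = v d ^ 4 := fun d => by ring
    simp_rw [e] at this
    exact this
  -- identification of the sums
  have hsum_u : ∑ d : ZMod p, u d = (B.card : ℝ) * B.card := by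
    rw [hu_def, ← Nat.cast_sum]
    exact_mod_cast congrArg (Nat.cast : ℕ → ℝ) (sum_r B)
  have hsum_u2 : ∑ d : ZMod p, u d ^ 2 = (Finset.addEnergy B B : ℝ) := by
    rw [hu_def]
    push_cast [← sum_r_sq B]
    rfl
  have hsum_v4 : ∑ d : ZMod p, v d ^ 4 = (p : ℝ) * (Finset.addEnergy A A : ℝ) :=
    parseval A
  -- combine
  have hQ0 : 0 ≤ ∑ d : ZMod p, u d * v d :=
    Finset.sum_nonneg fun d _ => mul_nonneg (hu0 d) (hv0 d)
  have hA0 : (0:ℝ) ≤ A.card := Nat.cast_nonneg _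
  have hN2 : ‖∑ a ∈ A, ∑ b ∈ B, ep p (a * b)‖ ^ 8
      = (‖∑ a ∈ A, ∑ b ∈ B, ep p (a * b)‖ ^ 2) ^ 4 := by ring
  have hfinal : ((A.card : ℝ) * T) ^ 4
      ≤ (p : ℝ) * (A.card : ℝ) ^ 4 * (B.card : ℝ) ^ 4 *
        (Finset.addEnergy A A : ℝ) * (Finset.addEnergy B B : ℝ) := by
    have hT4 : T ^ 4 ≤ (∑ d : ZMod p, u d * v d) ^ 4 := by
      apply pow_le_pow_left₀ hT0 step2
    have hQ4 : (∑ d : ZMod p, u d * v d) ^ 4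
        ≤ ((∑ d : ZMod p, u d) * (∑ d : ZMod p, u d * v d ^ 2)) ^ 2 := by
      calc (∑ d : ZMod p, u d * v d) ^ 4
          = ((∑ d : ZMod p, u d * v d) ^ 2) ^ 2 := by ring
        _ ≤ ((∑ d : ZMod p, u d) * (∑ d : ZMod p, u d * v d ^ 2)) ^ 2 := by
            apply pow_le_pow_left₀ (sq_nonneg _) step3
    have hR : ((∑ d : ZMod p, u d) * (∑ d : ZMod p, u d * v d ^ 2)) ^ 2
        ≤ (∑ d : ZMod p, u d) ^ 2 * ((∑ d : ZMod p, u d ^ 2) * (∑ d : ZMod p, v d ^ 4)) := by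
      rw [mul_pow]
      apply mul_le_mul_of_nonneg_left step4 (sq_nonneg _)
    have hsum_u_nonneg : 0 ≤ ∑ d : ZMod p, u d := Finset.sum_nonneg fun d _ => hu0 d
    have hT4' : T ^ 4 ≤ (∑ d : ZMod p, u d) ^ 2 *
        ((∑ d : ZMod p, u d ^ 2) * (∑ d : ZMod p, v d ^ 4)) :=
      le_trans hT4 (le_trans hQ4 hR)
    rw [mul_pow]
    calc (A.card : ℝ) ^ 4 * T ^ 4
        ≤ (A.card : ℝ) ^ 4 * ((∑ d : ZMod p, u d) ^ 2 *
            ((∑ d : ZMod p, u d ^ 2) * (∑ d : ZMod p, v d ^ 4))) := by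
          apply mul_le_mul_of_nonneg_left hT4' (by positivity)
      _ = (p : ℝ) * (A.card : ℝ) ^ 4 * (B.card : ℝ) ^ 4 *
          (Finset.addEnergy A A : ℝ) * (Finset.addEnergy B B : ℝ) := by
          rw [hsum_u, hsum_u2, hsum_v4]
          ring
  calc ‖∑ a ∈ A, ∑ b ∈ B, ep p (a * b)‖ ^ 8
      = (‖∑ a ∈ A, ∑ b ∈ B, ep p (a * b)‖ ^ 2) ^ 4 := hN2
    _ ≤ ((A.card : ℝ) * T) ^ 4 := by
        apply pow_le_pow_left₀ (sq_nonneg _) step1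
    _ ≤ _ := hfinal
end
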